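/- Fix constants L, β, h⋆ > 0. There exists a constant c > 0, depending only on L, β and h⋆, such that for all C¹ functions m, Γ : [0,L] → ℝ with ∫₀ᴸ (m(x) + Γ(x)) dx = 0, one has ∫₀ᴸ (m² + Γ²) dx ≤ c·( ∫₀ᴸ (β·m − h⋆·Γ)² dx + ∫₀ᴸ ( (∂ₓm)² + (∂ₓΓ)² ) dx ). -/

import Mathlib

open Set intervalIntegral MeasureTheory
open scoped Interval

lemma exists_zero_aux (L : ℝ) (hL : 0 < L) (s : ℝ → ℝ) (hc : Continuous s)
    (h0 : ∫ x in (0:ℝ)..L, s x = 0) : ∃ x₀ ∈ Icc (0:ℝ) L, s x₀ = 0 := by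
  by_contra h
  push_neg at h
  have hint : IntervalIntegrable s volume 0 L := hc.intervalIntegrable _ _
  rcases lt_trichotomy (s 0) 0 with h1 | h1 | h1
  · -- s negative everywhere on Icc
    have hneg : ∀ x ∈ Icc (0:ℝ) L, s x < 0 := by
      intro x hx
      rcases lt_trichotomy (s x) 0 with h2 | h2 | h2
      · exact h2
      · exact absurd h2 (h x hx)
      · have : (0:ℝ) ∈ uIcc (s 0) (s x) := by
          rw [Set.mem_uIcc]; left; exact ⟨h1.le, h2.le⟩
        have := intermediate_value_uIcc (hc.continuousOn (s := uIcc 0 x)) this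
        obtain ⟨y, hy, hy0⟩ := this
        have : y ∈ Icc (0:ℝ) L := by
          have : uIcc (0:ℝ) x ⊆ Icc 0 L := by
            rw [uIcc_of_le hx.1]
            exact Icc_subset_Icc le_rfl hx.2
          exact this hy
        exact absurd hy0 (h y this)
    have : 0 < ∫ x in (0:ℝ)..L, -s x := by
      apply intervalIntegral_pos_of_pos_on (hint.neg) _ hL
      intro x hx
      simpa using hneg x ⟨hx.1.le, hx.2.le⟩
    rw [intervalIntegral.integral_neg, h0, neg_zero] at this
    exact lt_irrefl 0 this
  · exact h 0 ⟨le_rfl, hL.le⟩ h1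
  · have hpos : ∀ x ∈ Icc (0:ℝ) L, 0 < s x := by
      intro x hx
      rcases lt_trichotomy (s x) 0 with h2 | h2 | h2
      · have : (0:ℝ) ∈ uIcc (s 0) (s x) := by
          rw [Set.mem_uIcc]; right; exact ⟨h2.le, h1.le⟩
        have := intermediate_value_uIcc (hc.continuousOn (s := uIcc 0 x)) this
        obtain ⟨y, hy, hy0⟩ := this
        have : y ∈ Icc (0:ℝ) L := by
          have : uIcc (0:ℝ) x ⊆ Icc 0 L := by
            rw [uIcc_of_le hx.1]
            exact Icc_subset_Icc le_rfl hx.2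
          exact this hy
        exact absurd hy0 (h y this)
      · exact absurd h2 (h x hx)
      · exact h2
    have : 0 < ∫ x in (0:ℝ)..L, s x := by
      apply intervalIntegral_pos_of_pos_on hint _ hL
      intro x hx
      exact hpos x ⟨hx.1.le, hx.2.le⟩
    rw [h0] at this
    exact lt_irrefl 0 this

lemma poincare_aux (L : ℝ) (hL : 0 < L) (s : ℝ → ℝ) (hs : ContDiff ℝ 1 s)
    (h0 : ∫ x in (0:ℝ)..L, s x = 0) :
    ∫ x in (0:ℝ)..L, (s x) ^ 2 ≤ 4 * L ^ 2 * ∫ x in (0:ℝ)..L, (deriv s x) ^ 2 := by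
  obtain ⟨x₀, hx₀, hsx₀⟩ := exists_zero_aux L hL s hs.continuous h0
  have hds : Continuous (deriv s) := hs.continuous_deriv le_rfl
  have h2L : (0:ℝ) < 2 * L := by linarith
  set G : ℝ → ℝ := fun t => ((s t) ^ 2 + (2 * L) ^ 2 * (deriv s t) ^ 2) / (2 * L) with hG
  have hGc : Continuous G := by
    apply Continuous.div_const
    exact (hs.continuous.pow 2).add (continuous_const.mul (hds.pow 2))
  have hGint : IntervalIntegrable G volume 0 L := hGc.intervalIntegrable _ _
  have hs2int : IntervalIntegrable (fun x => (s x) ^ 2) volume 0 L :=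
    ((hs.continuous.pow 2)).intervalIntegrable _ _
  have hds2int : IntervalIntegrable (fun x => (deriv s x) ^ 2) volume 0 L :=
    (hds.pow 2).intervalIntegrable _ _
  set B : ℝ := ∫ t in (0:ℝ)..L, G t with hB
  -- pointwise bound s x ^ 2 ≤ B for x ∈ Icc 0 L
  have key : ∀ x ∈ Icc (0:ℝ) L, (s x) ^ 2 ≤ B := by
    intro x hx
    have hftc : (s x) ^ 2 - (s x₀) ^ 2 = ∫ t in x₀..x, 2 * s t ^ 1 * deriv s t := by
      rw [← intervalIntegral.integral_eq_sub_of_hasDerivAt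
        (f := fun t => (s t) ^ 2) (f' := fun t => 2 * s t ^ 1 * deriv s t)]
      · intro t _
        have := ((hs.differentiable one_ne_zero) t).hasDerivAt
        simpa using this.fun_pow 2
      · exact ((continuous_const.mul ((hs.continuous.pow 1))).mul hds).intervalIntegrable _ _
    have heq : (s x) ^ 2 = ∫ t in x₀..x, 2 * s t ^ 1 * deriv s t := by
      rw [← hftc, hsx₀]; ring
    have h1 : (s x) ^ 2 ≤ |∫ t in x₀..x, 2 * s t ^ 1 * deriv s t| := by
      rw [heq]; exact le_abs_self _
    have h2 : |∫ t in x₀..x, 2 * s t ^ 1 * deriv s t|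
        ≤ ∫ t in Ι x₀ x, |2 * s t ^ 1 * deriv s t| := by
      have := intervalIntegral.norm_integral_le_integral_norm_uIoc
        (f := fun t => 2 * s t ^ 1 * deriv s t) (a := x₀) (b := x) (μ := volume)
      simpa only [Real.norm_eq_abs] using this
    have hsub : Ι x₀ x ⊆ Ioc (0:ℝ) L := by
      apply Set.Ioc_subset_Ioc
      · exact le_min hx₀.1 hx.1
      · exact max_le hx₀.2 hx.2
    have habs : Continuous (fun t => |2 * s t ^ 1 * deriv s t|) :=
      ((continuous_const.mul (hs.continuous.pow 1)).mul hds).abs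
    have h3 : ∫ t in Ι x₀ x, |2 * s t ^ 1 * deriv s t|
        ≤ ∫ t in Ioc (0:ℝ) L, |2 * s t ^ 1 * deriv s t| := by
      apply MeasureTheory.setIntegral_mono_set
      · exact (habs.intervalIntegrable 0 L).1
      · exact Filter.Eventually.of_forall (fun t => abs_nonneg _)
      · exact Filter.Eventually.of_forall hsub
    have h4 : ∫ t in Ioc (0:ℝ) L, |2 * s t ^ 1 * deriv s t| ≤ B := by
      rw [← intervalIntegral.integral_of_le hL.le, hB]
      apply intervalIntegral.integral_mono_on hL.le
        (habs.intervalIntegrable _ _) hGint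
      intro t _
      have hptwise : |2 * s t ^ 1 * deriv s t| ≤ G t := by
        rw [hG]
        rw [le_div_iff₀ h2L, abs_mul, abs_mul, abs_two]
        simp only [pow_one]
        nlinarith [sq_nonneg (|s t| - 2 * L * |deriv s t|), sq_abs (s t), sq_abs (deriv s t),
          abs_nonneg (s t), abs_nonneg (deriv s t)]
      exact hptwise
    linarith
  have hint1 : ∫ x in (0:ℝ)..L, (s x) ^ 2 ≤ ∫ x in (0:ℝ)..L, B :=
    intervalIntegral.integral_mono_on hL.le hs2int
      (intervalIntegrable_const) key
  have hBval : B = (2*L)⁻¹ * ((∫ x in (0:ℝ)..L, (s x)^2)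
      + (2*L)^2 * (∫ x in (0:ℝ)..L, (deriv s x)^2)) := by
    rw [hB, hG]
    simp only [div_eq_inv_mul]
    rw [intervalIntegral.integral_const_mul,
      intervalIntegral.integral_add hs2int (hds2int.const_mul _),
      intervalIntegral.integral_const_mul]
  rw [intervalIntegral.integral_const, smul_eq_mul, hBval] at hint1
  have hI : 0 ≤ ∫ x in (0:ℝ)..L, (deriv s x)^2 := by
    apply intervalIntegral.integral_nonneg hL.le
    intro t _; positivity
  have e1 : (L - 0) * ((2*L)⁻¹ * ((∫ x in (0:ℝ)..L, (s x)^2)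
      + (2*L)^2 * (∫ x in (0:ℝ)..L, (deriv s x)^2)))
      = (∫ x in (0:ℝ)..L, (s x)^2) / 2 + 2*L^2 * (∫ x in (0:ℝ)..L, (deriv s x)^2) := by
    field_simp
    ring
  rw [e1] at hint1
  linarith

/-- A Poincaré-type inequality: there is `c > 0` such that for all C¹
functions `m, Γ` on `[0,L]` with `∫₀ᴸ (m + Γ) dx = 0`,
`∫₀ᴸ (m² + Γ²) ≤ c (∫₀ᴸ (βm − h⋆Γ)² + ∫₀ᴸ ((∂ₓm)² + (∂ₓΓ)²))`. -/
theorem stmt_14 (L β hstar : ℝ) (hL : 0 < L) (hβ : 0 < β) (hh : 0 < hstar) :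
    ∃ c : ℝ, 0 < c ∧ ∀ m Γ : ℝ → ℝ, ContDiff ℝ 1 m → ContDiff ℝ 1 Γ →
      (∫ x in (0:ℝ)..L, (m x + Γ x)) = 0 →
      ∫ x in (0:ℝ)..L, ((m x) ^ 2 + (Γ x) ^ 2)
        ≤ c * ((∫ x in (0:ℝ)..L, (β * m x - hstar * Γ x) ^ 2)
            + ∫ x in (0:ℝ)..L, ((deriv m x) ^ 2 + (deriv Γ x) ^ 2)) := by
  set K := β + hstar with hK
  have hKpos : 0 < K := by positivity
  set C₁ : ℝ := 4 / K ^ 2 with hC₁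
  set C₂ : ℝ := 2 * (β ^ 2 + hstar ^ 2) / K ^ 2 with hC₂
  have hC₁pos : 0 < C₁ := by positivity
  have hC₂pos : 0 < C₂ := by positivity
  refine ⟨C₁ + 8 * C₂ * L ^ 2, by positivity, ?_⟩
  intro m Γ hm hΓ hmean
  set s : ℝ → ℝ := fun x => m x + Γ x with hsdef
  have hscd : ContDiff ℝ 1 s := hm.add hΓ
  have hmd := hm.differentiable one_ne_zero
  have hΓd := hΓ.differentiable one_ne_zero
  have hdm : Continuous (deriv m) := hm.continuous_deriv le_rfl
  have hdΓ : Continuous (deriv Γ) := hΓ.continuous_deriv le_rfl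
  have hds_eq : ∀ x, deriv s x = deriv m x + deriv Γ x := by
    intro x
    exact deriv_add (hmd x) (hΓd x)
  -- Poincaré for s
  have hP : ∫ x in (0:ℝ)..L, (s x) ^ 2 ≤ 4 * L ^ 2 * ∫ x in (0:ℝ)..L, (deriv s x) ^ 2 :=
    poincare_aux L hL s hscd hmean
  -- integrability
  have hconts : Continuous s := hscd.continuous
  have hds : Continuous (deriv s) := hscd.continuous_deriv le_rfl
  have i1 : IntervalIntegrable (fun x => (m x)^2 + (Γ x)^2) volume 0 L :=
    ((hm.continuous.pow 2).add (hΓ.continuous.pow 2)).intervalIntegrable _ _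
  have i2 : IntervalIntegrable (fun x => (β * m x - hstar * Γ x)^2) volume 0 L :=
    (((continuous_const.mul hm.continuous).sub
      (continuous_const.mul hΓ.continuous)).pow 2).intervalIntegrable _ _
  have i3 : IntervalIntegrable (fun x => (s x)^2) volume 0 L :=
    (hconts.pow 2).intervalIntegrable _ _
  have i4 : IntervalIntegrable (fun x => (deriv s x)^2) volume 0 L :=
    (hds.pow 2).intervalIntegrable _ _
  have i5 : IntervalIntegrable (fun x => (deriv m x)^2 + (deriv Γ x)^2) volume 0 L :=
    ((hdm.pow 2).add (hdΓ.pow 2)).intervalIntegrable _ _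
  -- pointwise: m² + Γ² ≤ C₁ d² + C₂ s²
  have hpt : ∀ x ∈ Icc (0:ℝ) L, (m x)^2 + (Γ x)^2
      ≤ C₁ * (β * m x - hstar * Γ x)^2 + C₂ * (s x)^2 := by
    intro x _
    have hid1 : K * m x = (β * m x - hstar * Γ x) + hstar * s x := by
      simp only [hsdef, hK]; ring
    have hid2 : K * Γ x = β * s x - (β * m x - hstar * Γ x) := by
      simp only [hsdef, hK]; ring
    have hK2 : (0:ℝ) < K ^ 2 := by positivity
    rw [hC₁, hC₂]
    rw [div_mul_eq_mul_div, div_mul_eq_mul_div, ← add_div, le_div_iff₀ hK2]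
    have hsq1 : (K * m x)^2 = ((β * m x - hstar * Γ x) + hstar * s x)^2 := by rw [hid1]
    have hsq2 : (K * Γ x)^2 = (β * s x - (β * m x - hstar * Γ x))^2 := by rw [hid2]
    nlinarith [hsq1, hsq2, sq_nonneg ((β * m x - hstar * Γ x) - hstar * s x),
      sq_nonneg (β * s x + (β * m x - hstar * Γ x))]
  have step1 : ∫ x in (0:ℝ)..L, ((m x)^2 + (Γ x)^2)
      ≤ ∫ x in (0:ℝ)..L, (C₁ * (β * m x - hstar * Γ x)^2 + C₂ * (s x)^2) :=
    intervalIntegral.integral_mono_on hL.le i1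
      ((i2.const_mul _).add (i3.const_mul _)) hpt
  rw [intervalIntegral.integral_add (i2.const_mul _) (i3.const_mul _),
    intervalIntegral.integral_const_mul, intervalIntegral.integral_const_mul] at step1
  -- bound ∫ (s')² ≤ 2 ∫ (m'² + Γ'²)
  have step2 : ∫ x in (0:ℝ)..L, (deriv s x)^2
      ≤ ∫ x in (0:ℝ)..L, (2 * ((deriv m x)^2 + (deriv Γ x)^2)) := by
    apply intervalIntegral.integral_mono_on hL.le i4 (i5.const_mul 2)
    intro x _
    rw [hds_eq x]
    nlinarith [sq_nonneg (deriv m x - deriv Γ x)]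
  rw [intervalIntegral.integral_const_mul] at step2
  have hd2 : 0 ≤ ∫ x in (0:ℝ)..L, (β * m x - hstar * Γ x)^2 :=
    intervalIntegral.integral_nonneg hL.le (fun t _ => sq_nonneg _)
  have hdd : 0 ≤ ∫ x in (0:ℝ)..L, ((deriv m x)^2 + (deriv Γ x)^2) :=
    intervalIntegral.integral_nonneg hL.le (fun t _ => by positivity)
  have p1 : C₂ * (∫ x in (0:ℝ)..L, (s x)^2)
      ≤ C₂ * (4 * L ^ 2 * ∫ x in (0:ℝ)..L, (deriv s x)^2) :=
    mul_le_mul_of_nonneg_left hP hC₂pos.le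
  have p2 : (4 * C₂ * L ^ 2) * (∫ x in (0:ℝ)..L, (deriv s x)^2)
      ≤ (4 * C₂ * L ^ 2) * (2 * ∫ x in (0:ℝ)..L, ((deriv m x)^2 + (deriv Γ x)^2)) :=
    mul_le_mul_of_nonneg_left step2 (by positivity)
  have p3 : 0 ≤ C₁ * ∫ x in (0:ℝ)..L, ((deriv m x)^2 + (deriv Γ x)^2) :=
    mul_nonneg hC₁pos.le hdd
  have p4 : 0 ≤ (8 * C₂ * L ^ 2) * ∫ x in (0:ℝ)..L, (β * m x - hstar * Γ x)^2 :=
    mul_nonneg (by positivity) hd2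
  nlinarith [step1, p1, p2, p3, p4]
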